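/- Let 𝕜 be a field whose characteristic does not divide n!·|G|^n, where G is a finite group and n ≥ 1, and let k ∈ ℕ. An endomorphism θ ∈ End_𝕜(V^{⊗k}) commutes with Φ(P,g) for every G-partition (P,g) of type (k;k) if and only if θ is the action of some element of the group algebra 𝕜[G_n], i.e., θ lies in the image of the algebra homomorphism 𝕜[G_n] → End_𝕜(V^{⊗k}). -/

import Mathlib

/-!
Statement 14 (double centralizer): let `𝕜` be a field whose characteristic does not
divide `n! · |G|^n = |G_n|`.  An endomorphism `θ` of `V^{⊗k}` commutes with `Φ(P,g)` for
every `G`-partition `(P,g)` of type `(k; k)` if and only if `θ` lies in the image of the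
canonical algebra homomorphism `𝕜[G_n] → End_𝕜(V^{⊗k})` induced by the diagonal action.
-/

namespace GPC

variable (G : Type*) [Group G]

def wreathAut (n : ℕ) : Equiv.Perm (Fin n) →* MulAut (Fin n → G) where
  toFun π :=
    { toFun := fun g => g ∘ ⇑π⁻¹
      invFun := fun g => g ∘ ⇑π
      left_inv := fun g => by funext i; simp
      right_inv := fun g => by funext i; simp
      map_mul' := fun g h => rfl }
  map_one' := by ext g i; simp
  map_mul' := fun π σ => by ext g i; simp

/-- The wreath product `G_n = Gⁿ ⋊ S_n`. -/
abbrev Wr (n : ℕ) := (Fin n → G) ⋊[wreathAut G n] Equiv.Perm (Fin n)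

variable {G}

/-- Equivalence of `G`-partitions with the same underlying partition `P`
(a set partition is encoded as a `Setoid`, whose classes are the parts):
`(P, g) ∼ (P, g')` iff for every part there is `t ∈ G` with `g' = t * g` on that part. -/
def LabelEquiv {X : Type*} (P : Setoid X) (g g' : X → G) : Prop :=
  ∀ a : X, ∃ t : G, ∀ b : X, P a b → g' b = t * g b

/-- The number of parts of a set partition (encoded as a `Setoid`). -/
noncomputable def numParts {X : Type*} (P : Setoid X) : ℕ := Nat.card (Quotient P)

variable (G) in
/-- The image of the basis vector `g e_i` of `V` under the action of `γ ∈ G_n`: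
`(h π) · (g e_i) = h_{π i} g e_{π i}`. -/
def actBasis (n : ℕ) (γ : Wr G n) (p : G × Fin n) : G × Fin n :=
  (γ.left (γ.right p.2) * p.1, γ.right p.2)

variable (𝕜 : Type*) [CommRing 𝕜] (G) (n : ℕ)

/-- The diagonal action of `γ ∈ G_n` on `V^{⊗k}`, realized on the standard basis
of `V^{⊗k}` given by `k`-tuples of basis vectors of `V`. -/
noncomputable def dAct (k : ℕ) (γ : Wr G n) :
    ((Fin k → G × Fin n) →₀ 𝕜) →ₗ[𝕜] ((Fin k → G × Fin n) →₀ 𝕜) :=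
  Finsupp.lmapDomain 𝕜 𝕜 (fun v j => actBasis G n γ (v j))

variable [Fintype G]

open scoped Classical in
/-- The matrix-entry condition defining `Φ(P, g)`: the entry at `(w, v)` is `1`
iff for all `a, b` in the same part of `P` the indices agree and
`h_a g_a⁻¹ = h_b g_b⁻¹`, where `(h, i)` is read off from `v` on the bottom row
and from `w` on the top row. -/
def phiCond {k l : ℕ} (P : Setoid (Fin k ⊕ Fin l)) (g : Fin k ⊕ Fin l → G)
    (v : Fin k → G × Fin n) (w : Fin l → G × Fin n) : Prop :=
  ∀ a b : Fin k ⊕ Fin l, P a b →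
    (Sum.elim v w a).2 = (Sum.elim v w b).2
      ∧ (Sum.elim v w a).1 * (g a)⁻¹ = (Sum.elim v w b).1 * (g b)⁻¹

open scoped Classical in
/-- The map `Φ(P, g) : V^{⊗k} → V^{⊗l}` attached to a `G`-partition `(P, g)` of
type `(l; k)`, defined by its matrix entries on the standard bases. -/
noncomputable def Phi {k l : ℕ} (P : Setoid (Fin k ⊕ Fin l)) (g : Fin k ⊕ Fin l → G) :
    ((Fin k → G × Fin n) →₀ 𝕜) →ₗ[𝕜] ((Fin l → G × Fin n) →₀ 𝕜) :=
  Finsupp.lift _ 𝕜 _ fun v => ∑ w : Fin l → G × Fin n,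
    if phiCond G n P g v w then Finsupp.single w (1 : 𝕜) else 0

variable {G}

lemma actBasis_one (n : ℕ) : actBasis G n 1 = id := by
  funext p
  simp [actBasis]

lemma actBasis_mul (n : ℕ) (γ δ : Wr G n) :
    actBasis G n (γ * δ) = actBasis G n γ ∘ actBasis G n δ := by
  funext p
  simp [actBasis, SemidirectProduct.mul_left, SemidirectProduct.mul_right, wreathAut,
    mul_assoc]

variable (G)

/-- The diagonal action of `G_n` on `V^{⊗k}` as a monoid homomorphism into the
endomorphism algebra. -/
noncomputable def dActHom (k : ℕ) : Wr G n →* Module.End 𝕜 ((Fin k → G × Fin n) →₀ 𝕜) where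
  toFun γ := Finsupp.lmapDomain 𝕜 𝕜 (fun v => actBasis G n γ ∘ v)
  map_one' := by
    try simp only []
    rw [actBasis_one]
    simp only [Function.id_comp]
    exact Finsupp.lmapDomain_id 𝕜 𝕜
  map_mul' := fun γ δ => by
    try simp only []
    rw [actBasis_mul]
    have : (fun v : Fin k → G × Fin n => (actBasis G n γ ∘ actBasis G n δ) ∘ v)
        = (fun v : Fin k → G × Fin n => actBasis G n γ ∘ v)
          ∘ (fun v => actBasis G n δ ∘ v) := by
      funext v; rfl
    rw [this, Finsupp.lmapDomain_comp]
    rfl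

-- ===================== auxiliary development =====================
namespace DC

open Finsupp

variable {𝕜 : Type*} [Field 𝕜] {G : Type*} [Group G] [Fintype G] {n k : ℕ}

lemma actBasis_inv_comp (γ : Wr G n) (p : G × Fin n) :
    actBasis G n γ⁻¹ (actBasis G n γ p) = p := by
  have h := congrFun (actBasis_mul n γ⁻¹ γ) p
  rw [inv_mul_cancel, actBasis_one] at h
  exact h.symm

lemma actBasis_bijective (γ : Wr G n) : Function.Bijective (actBasis G n γ) :=
  Function.bijective_iff_has_inverse.2
    ⟨actBasis G n γ⁻¹, actBasis_inv_comp γ, fun p => by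
      have h := actBasis_inv_comp (G := G) (n := n) γ⁻¹ p
      rwa [inv_inv] at h⟩

lemma actBasis_comp_injective (γ : Wr G n) :
    Function.Injective (fun v : Fin k → G × Fin n => actBasis G n γ ∘ v) := fun v v' h => by
  funext j
  exact (actBasis_bijective γ).1 (congrFun h j)

lemma dActHom_def (γ : Wr G n) :
    dActHom G 𝕜 n k γ = Finsupp.lmapDomain 𝕜 𝕜 (fun v => actBasis G n γ ∘ v) := rfl

lemma dActHom_single (γ : Wr G n) (v : Fin k → G × Fin n) (c : 𝕜) :
    dActHom G 𝕜 n k γ (single v c) = single (actBasis G n γ ∘ v) c := by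
  rw [dActHom_def, lmapDomain_apply, mapDomain_single]

/-- Matrix entry of an endomorphism of `V^{⊗k}`. -/
noncomputable def ent (φ : ((Fin k → G × Fin n) →₀ 𝕜) →ₗ[𝕜] ((Fin k → G × Fin n) →₀ 𝕜))
    (v w : Fin k → G × Fin n) : 𝕜 := φ (single v 1) w

lemma ext_of_ent {φ ψ : ((Fin k → G × Fin n) →₀ 𝕜) →ₗ[𝕜] ((Fin k → G × Fin n) →₀ 𝕜)}
    (h : ∀ v w, ent φ v w = ent ψ v w) : φ = ψ := by
  apply Finsupp.lhom_ext (fun v b => ?_)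
  have hb : single v b = b • single v (1 : 𝕜) := by rw [Finsupp.smul_single', mul_one]
  rw [hb, map_smul, map_smul]
  congr 1
  exact Finsupp.ext fun w => h v w

open scoped Classical in
lemma phi_ent {P : Setoid (Fin k ⊕ Fin k)} {g : Fin k ⊕ Fin k → G}
    (v w : Fin k → G × Fin n) :
    ent (Phi G 𝕜 n P g) v w = if phiCond G n P g v w then 1 else 0 := by
  rw [ent, Phi, Finsupp.lift_apply, Finsupp.sum_single_index (by simp), one_smul,
    Finsupp.finset_sum_apply]
  rw [Finset.sum_eq_single w]
  · split_ifs with h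
    · simp
    · simp
  · intro w' _ hne
    split_ifs with h
    · exact Finsupp.single_eq_of_ne' hne
    · rfl
  · intro h
    exact absurd (Finset.mem_univ w) h


lemma elim_comp {α : Type*} (f : G × Fin n → α) (v w : Fin k → G × Fin n) :
    Sum.elim (f ∘ v) (f ∘ w) = f ∘ Sum.elim v w := by
  funext x; cases x <;> rfl

lemma phiCond_act_iff {P : Setoid (Fin k ⊕ Fin k)} {g : Fin k ⊕ Fin k → G} (γ : Wr G n)
    (v w : Fin k → G × Fin n) :
    phiCond G n P g (actBasis G n γ ∘ v) (actBasis G n γ ∘ w) ↔ phiCond G n P g v w := by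
  unfold phiCond
  rw [elim_comp]
  set m := Sum.elim v w with hm
  constructor
  · intro H a b hab
    obtain ⟨h1, h2⟩ := H a b hab
    have hi : (m a).2 = (m b).2 := γ.right.injective h1
    refine ⟨hi, ?_⟩
    have h2' : γ.left (γ.right (m a).2) * ((m a).1 * (g a)⁻¹)
        = γ.left (γ.right (m b).2) * ((m b).1 * (g b)⁻¹) := by
      simpa [actBasis, mul_assoc] using h2
    rw [hi] at h2'
    exact mul_left_cancel h2'
  · intro H a b hab
    obtain ⟨h1, h2⟩ := H a b hab
    refine ⟨?_, ?_⟩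
    · show γ.right (m a).2 = γ.right (m b).2
      rw [h1]
    · show γ.left (γ.right (m a).2) * (m a).1 * (g a)⁻¹
        = γ.left (γ.right (m b).2) * (m b).1 * (g b)⁻¹
      rw [mul_assoc, mul_assoc, h1, h2]

lemma act_inv_comp_cancel {α : Type*} (γ : Wr G n) (w : α → G × Fin n) :
    actBasis G n γ ∘ (actBasis G n γ⁻¹ ∘ w) = w := by
  funext j
  have := actBasis_inv_comp (G := G) (n := n) γ⁻¹ (w j)
  rwa [inv_inv] at this

lemma act_comp_inv_cancel {α : Type*} (γ : Wr G n) (w : α → G × Fin n) :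
    actBasis G n γ⁻¹ ∘ (actBasis G n γ ∘ w) = w := by
  funext j
  exact actBasis_inv_comp (G := G) (n := n) γ (w j)

open scoped Classical in
/-- `Φ(P,g)` commutes with the diagonal `G_n`-action. -/
lemma phi_comm (P : Setoid (Fin k ⊕ Fin k)) (g : Fin k ⊕ Fin k → G) (γ : Wr G n) :
    Phi G 𝕜 n P g ∘ₗ dActHom G 𝕜 n k γ = dActHom G 𝕜 n k γ ∘ₗ Phi G 𝕜 n P g := by
  apply ext_of_ent
  intro v w
  have hL : ent (Phi G 𝕜 n P g ∘ₗ dActHom G 𝕜 n k γ) v w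
      = (if phiCond G n P g (actBasis G n γ ∘ v) w then (1 : 𝕜) else 0) := by
    rw [ent, LinearMap.comp_apply, dActHom_single]
    exact phi_ent (actBasis G n γ ∘ v) w
  have hR : ent (dActHom G 𝕜 n k γ ∘ₗ Phi G 𝕜 n P g) v w
      = (if phiCond G n P g v (actBasis G n γ⁻¹ ∘ w) then (1 : 𝕜) else 0) := by
    rw [ent, LinearMap.comp_apply, dActHom_def, lmapDomain_apply]
    have hmd := Finsupp.mapDomain_apply (actBasis_comp_injective (k := k) γ)
      (Phi G 𝕜 n P g (single v 1)) (actBasis G n γ⁻¹ ∘ w)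
    rw [act_inv_comp_cancel γ w] at hmd
    rw [hmd]
    exact phi_ent v _
  rw [hL, hR]
  have : phiCond G n P g (actBasis G n γ ∘ v) w
      ↔ phiCond G n P g v (actBasis G n γ⁻¹ ∘ w) := by
    conv_lhs => rw [show w = actBasis G n γ ∘ (actBasis G n γ⁻¹ ∘ w) from
      (act_inv_comp_cancel γ w).symm]
    exact phiCond_act_iff γ v _
  simp only [this]

/-- Entries of a commuting endomorphism are constant on `G_n`-orbits. -/
lemma ent_equivariant {φ : ((Fin k → G × Fin n) →₀ 𝕜) →ₗ[𝕜] ((Fin k → G × Fin n) →₀ 𝕜)}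
    (hφ : ∀ γ : Wr G n, φ ∘ₗ dActHom G 𝕜 n k γ = dActHom G 𝕜 n k γ ∘ₗ φ)
    (γ : Wr G n) (v w : Fin k → G × Fin n) :
    ent φ (actBasis G n γ ∘ v) (actBasis G n γ ∘ w) = ent φ v w := by
  have h1 : φ (single (actBasis G n γ ∘ v) 1) = dActHom G 𝕜 n k γ (φ (single v (1:𝕜))) := by
    rw [← dActHom_single]
    exact DFunLike.congr_fun (hφ γ) (single v 1)
  rw [ent, h1, dActHom_def, lmapDomain_apply,
    Finsupp.mapDomain_apply (actBasis_comp_injective γ)]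
  rfl

-- ================== combinatorics of orbits ==================

/-- The "coarsening" condition: entry condition of `Φ(P_u, g_u)` at `m`. -/
def Cnd (u m : Fin k ⊕ Fin k → G × Fin n) : Prop :=
  ∀ a b, (u a).2 = (u b).2 →
    (m a).2 = (m b).2 ∧ (m a).1 * (u a).1⁻¹ = (m b).1 * (u b).1⁻¹

def uSetoid (u : Fin k ⊕ Fin k → G × Fin n) : Setoid (Fin k ⊕ Fin k) :=
  ⟨fun a b => (u a).2 = (u b).2, ⟨fun _ => rfl, Eq.symm, Eq.trans⟩⟩

lemma phiCond_uSetoid (u : Fin k ⊕ Fin k → G × Fin n) (v w : Fin k → G × Fin n) :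
    phiCond G n (uSetoid u) (fun a => (u a).1) v w ↔ Cnd u (Sum.elim v w) :=
  Iff.rfl

def dcount (u : Fin k ⊕ Fin k → G × Fin n) : ℕ :=
  (Finset.univ.filter
    (fun p : (Fin k ⊕ Fin k) × (Fin k ⊕ Fin k) => (u p.1).2 = (u p.2).2)).card

lemma dcount_le_of_Cnd {u m : Fin k ⊕ Fin k → G × Fin n} (h : Cnd u m) :
    dcount u ≤ dcount m := by
  apply Finset.card_le_card
  intro p hp
  simp only [Finset.mem_filter, Finset.mem_univ, true_and] at hp ⊢
  exact (h p.1 p.2 hp).1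

lemma Cnd_refl (u : Fin k ⊕ Fin k → G × Fin n) : Cnd u u :=
  fun a b h => ⟨h, by simp⟩

lemma Cnd_trans {u m m' : Fin k ⊕ Fin k → G × Fin n} (h : Cnd u m) (h' : Cnd m m') :
    Cnd u m' := by
  intro a b hab
  obtain ⟨h1, h2⟩ := h a b hab
  obtain ⟨h1', h2'⟩ := h' a b h1
  refine ⟨h1', ?_⟩
  have := congrArg₂ (· * ·) h2' h2
  simpa [mul_assoc] using this

lemma Cnd_act (γ : Wr G n) (u : Fin k ⊕ Fin k → G × Fin n) :
    Cnd u (actBasis G n γ ∘ u) := by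
  intro a b hab
  refine ⟨?_, ?_⟩
  · show γ.right (u a).2 = γ.right (u b).2
    rw [hab]
  · show γ.left (γ.right (u a).2) * (u a).1 * (u a).1⁻¹
      = γ.left (γ.right (u b).2) * (u b).1 * (u b).1⁻¹
    rw [mul_inv_cancel_right, mul_inv_cancel_right, hab]

open scoped Classical in
/-- Combinatorially equivalent configurations lie in the same `G_n`-orbit. -/
lemma exists_wr {u m : Fin k ⊕ Fin k → G × Fin n}
    (h1 : ∀ a b, (u a).2 = (u b).2 ↔ (m a).2 = (m b).2)
    (h2 : ∀ a b, (u a).2 = (u b).2 → (m a).1 * (u a).1⁻¹ = (m b).1 * (u b).1⁻¹) :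
    ∃ γ : Wr G n, m = actBasis G n γ ∘ u := by
  set s : Finset (Fin n) := Finset.univ.image (fun a => (u a).2) with hs
  set t : Finset (Fin n) := Finset.univ.image (fun a => (m a).2) with ht
  set f : Fin n → Fin n :=
    fun i => if h : ∃ a, (u a).2 = i then (m h.choose).2 else i with hf
  set f' : Fin n → Fin n :=
    fun i => if h : ∃ a, (m a).2 = i then (u h.choose).2 else i with hf'
  have f_spec : ∀ a, f ((u a).2) = (m a).2 := by
    intro a
    have hex : ∃ b, (u b).2 = (u a).2 := ⟨a, rfl⟩
    have hch := hex.choose_spec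
    simp only [hf, dif_pos hex]
    exact ((h1 hex.choose a).1 hch)
  have f'_spec : ∀ a, f' ((m a).2) = (u a).2 := by
    intro a
    have hex : ∃ b, (m b).2 = (m a).2 := ⟨a, rfl⟩
    have hch := hex.choose_spec
    simp only [hf', dif_pos hex]
    exact ((h1 hex.choose a).2 hch)
  have f_mem : ∀ i, i ∈ s → f i ∈ t := by
    intro i hi
    rw [hs, Finset.mem_image] at hi
    obtain ⟨a, -, ha⟩ := hi
    rw [← ha, f_spec a, ht, Finset.mem_image]
    exact ⟨a, Finset.mem_univ a, rfl⟩
  have f'_mem : ∀ i, i ∈ t → f' i ∈ s := by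
    intro i hi
    rw [ht, Finset.mem_image] at hi
    obtain ⟨a, -, ha⟩ := hi
    rw [← ha, f'_spec a, hs, Finset.mem_image]
    exact ⟨a, Finset.mem_univ a, rfl⟩
  let e₁ : {i // i ∈ s} ≃ {i // i ∈ t} :=
    { toFun := fun i => ⟨f i.1, f_mem i.1 i.2⟩
      invFun := fun i => ⟨f' i.1, f'_mem i.1 i.2⟩
      left_inv := by
        rintro ⟨i, hi⟩
        rw [hs, Finset.mem_image] at hi
        obtain ⟨a, -, ha⟩ := hi
        apply Subtype.ext
        show f' (f i) = i
        rw [← ha, f_spec a, f'_spec a]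
      right_inv := by
        rintro ⟨i, hi⟩
        rw [ht, Finset.mem_image] at hi
        obtain ⟨a, -, ha⟩ := hi
        apply Subtype.ext
        show f (f' i) = i
        rw [← ha, f'_spec a, f_spec a] }
  have e₂ : {i // ¬ i ∈ s} ≃ {i // ¬ i ∈ t} := by
    apply Fintype.equivOfCardEq
    rw [Fintype.card_subtype_compl, Fintype.card_subtype_compl,
      Fintype.card_congr e₁]
  set π : Equiv.Perm (Fin n) :=
    ((Equiv.sumCompl (· ∈ s)).symm.trans ((e₁.sumCongr e₂).trans
      (Equiv.sumCompl (· ∈ t)))) with hπ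
  have π_spec : ∀ a, π ((u a).2) = (m a).2 := by
    intro a
    have hmem : (u a).2 ∈ s := by
      rw [hs, Finset.mem_image]; exact ⟨a, Finset.mem_univ a, rfl⟩
    rw [hπ]
    simp only [Equiv.trans_apply]
    rw [Equiv.sumCompl_symm_apply_of_pos hmem]
    show (Equiv.sumCompl (· ∈ t)) (Sum.inl (e₁ ⟨(u a).2, hmem⟩)) = (m a).2
    rw [Equiv.sumCompl_apply_inl]
    exact f_spec a
  set hfun : Fin n → G :=
    fun i => if h : ∃ a, (m a).2 = i then (m h.choose).1 * (u h.choose).1⁻¹ else 1 with hh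
  have h_spec : ∀ a, hfun ((m a).2) = (m a).1 * (u a).1⁻¹ := by
    intro a
    have hex : ∃ b, (m b).2 = (m a).2 := ⟨a, rfl⟩
    have hch := hex.choose_spec
    simp only [hh, dif_pos hex]
    exact h2 hex.choose a ((h1 hex.choose a).2 hch)
  refine ⟨⟨hfun, π⟩, ?_⟩
  funext a
  show m a = actBasis G n ⟨hfun, π⟩ (u a)
  have : actBasis G n ⟨hfun, π⟩ (u a) = (hfun (π ((u a).2)) * (u a).1, π ((u a).2)) := rfl
  rw [this, π_spec a, h_spec a, inv_mul_cancel_right]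

lemma exists_wr_of_Cnd_dcount {u m : Fin k ⊕ Fin k → G × Fin n}
    (h : Cnd u m) (hd : dcount u = dcount m) :
    ∃ γ : Wr G n, m = actBasis G n γ ∘ u := by
  classical
  have hsets : (Finset.univ.filter
      (fun p : (Fin k ⊕ Fin k) × (Fin k ⊕ Fin k) => (u p.1).2 = (u p.2).2))
      = (Finset.univ.filter
      (fun p : (Fin k ⊕ Fin k) × (Fin k ⊕ Fin k) => (m p.1).2 = (m p.2).2)) := by
    apply Finset.eq_of_subset_of_card_le
    · intro p hp
      simp only [Finset.mem_filter, Finset.mem_univ, true_and] at hp ⊢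
      exact (h p.1 p.2 hp).1
    · exact le_of_eq hd.symm
  apply exists_wr
  · intro a b
    constructor
    · exact fun hab => (h a b hab).1
    · intro hab
      have : (a, b) ∈ Finset.univ.filter
          (fun p : (Fin k ⊕ Fin k) × (Fin k ⊕ Fin k) => (u p.1).2 = (u p.2).2) := by
        rw [hsets]
        simp only [Finset.mem_filter, Finset.mem_univ, true_and]
        exact hab
      simpa using this
  · exact fun a b hab => (h a b hab).2

lemma dcount_act (γ : Wr G n) (u : Fin k ⊕ Fin k → G × Fin n) :
    dcount (actBasis G n γ ∘ u) = dcount u := by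
  apply le_antisymm
  · have := dcount_le_of_Cnd (Cnd_act γ⁻¹ (actBasis G n γ ∘ u))
    rwa [act_comp_inv_cancel] at this
  · exact dcount_le_of_Cnd (Cnd_act γ u)


-- ================== orbit representatives ==================

def orbSetoid : Setoid (Fin k ⊕ Fin k → G × Fin n) where
  r u m := ∃ γ : Wr G n, m = actBasis G n γ ∘ u
  iseqv := by
    refine ⟨fun u => ⟨1, ?_⟩, ?_, ?_⟩
    · rw [actBasis_one]; rfl
    · rintro u m ⟨γ, rfl⟩
      exact ⟨γ⁻¹, (act_comp_inv_cancel γ u).symm⟩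
    · rintro u m p ⟨γ, rfl⟩ ⟨δ, rfl⟩
      exact ⟨δ * γ, by rw [actBasis_mul]; rfl⟩

variable (G) in
noncomputable def rep (u : Fin k ⊕ Fin k → G × Fin n) : Fin k ⊕ Fin k → G × Fin n :=
  (Quotient.mk (orbSetoid (G := G) (n := n) (k := k)) u).out

lemma rep_spec (u : Fin k ⊕ Fin k → G × Fin n) :
    ∃ γ : Wr G n, u = actBasis G n γ ∘ rep G u :=
  Quotient.exact (s := orbSetoid (G := G) (n := n) (k := k))
    (Quotient.out_eq (Quotient.mk (orbSetoid (G := G) (n := n) (k := k)) u))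

lemma rep_eq_of_rel {u m : Fin k ⊕ Fin k → G × Fin n}
    (h : ∃ γ : Wr G n, m = actBasis G n γ ∘ u) : rep G u = rep G m := by
  unfold rep
  congr 1
  exact Quotient.sound h

lemma rep_idem (u : Fin k ⊕ Fin k → G × Fin n) : rep G (rep G u) = rep G u := by
  obtain ⟨γ, hγ⟩ := rep_spec (G := G) u
  exact rep_eq_of_rel ⟨γ, hγ⟩

-- ================== the spanning lemma ==================

/-- `Φ(P_u, g_u)` for the partition/labels extracted from a configuration `u`. -/
noncomputable def PhiU (u : Fin k ⊕ Fin k → G × Fin n) :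
    ((Fin k → G × Fin n) →₀ 𝕜) →ₗ[𝕜] ((Fin k → G × Fin n) →₀ 𝕜) :=
  Phi G 𝕜 n (uSetoid u) (fun a => (u a).1)

/-- Entry of an endomorphism at a combined configuration. -/
noncomputable def Ent (φ : ((Fin k → G × Fin n) →₀ 𝕜) →ₗ[𝕜] ((Fin k → G × Fin n) →₀ 𝕜))
    (m : Fin k ⊕ Fin k → G × Fin n) : 𝕜 :=
  ent φ (m ∘ Sum.inl) (m ∘ Sum.inr)

lemma Ent_elim (φ : ((Fin k → G × Fin n) →₀ 𝕜) →ₗ[𝕜] ((Fin k → G × Fin n) →₀ 𝕜))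
    (v w : Fin k → G × Fin n) : Ent φ (Sum.elim v w) = ent φ v w := rfl

open scoped Classical in
lemma Ent_PhiU (u m : Fin k ⊕ Fin k → G × Fin n) :
    Ent (PhiU (𝕜 := 𝕜) u) m = if Cnd u m then 1 else 0 := by
  rw [Ent, PhiU, phi_ent]
  have h : Sum.elim (m ∘ Sum.inl) (m ∘ Sum.inr) = m := Sum.elim_comp_inl_inr m
  have := phiCond_uSetoid (G := G) (n := n) u (m ∘ Sum.inl) (m ∘ Sum.inr)
  rw [h] at this
  simp only [this]

lemma Ent_sub (φ ψ : ((Fin k → G × Fin n) →₀ 𝕜) →ₗ[𝕜] ((Fin k → G × Fin n) →₀ 𝕜))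
    (m : Fin k ⊕ Fin k → G × Fin n) : Ent (φ - ψ) m = Ent φ m - Ent ψ m := by
  simp [Ent, ent]

lemma Ent_smul (c : 𝕜) (φ : ((Fin k → G × Fin n) →₀ 𝕜) →ₗ[𝕜] ((Fin k → G × Fin n) →₀ 𝕜))
    (m : Fin k ⊕ Fin k → G × Fin n) : Ent (c • φ) m = c * Ent φ m := by
  simp [Ent, ent]

lemma Ent_sum {α : Type*} (F : Finset α)
    (f : α → (((Fin k → G × Fin n) →₀ 𝕜) →ₗ[𝕜] ((Fin k → G × Fin n) →₀ 𝕜)))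
    (m : Fin k ⊕ Fin k → G × Fin n) : Ent (∑ u ∈ F, f u) m = ∑ u ∈ F, Ent (f u) m := by
  simp [Ent, ent, Finsupp.finset_sum_apply]

lemma Ent_equivariant {φ : ((Fin k → G × Fin n) →₀ 𝕜) →ₗ[𝕜] ((Fin k → G × Fin n) →₀ 𝕜)}
    (hφ : ∀ γ : Wr G n, φ ∘ₗ dActHom G 𝕜 n k γ = dActHom G 𝕜 n k γ ∘ₗ φ)
    (γ : Wr G n) (u : Fin k ⊕ Fin k → G × Fin n) :
    Ent φ (actBasis G n γ ∘ u) = Ent φ u :=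
  ent_equivariant hφ γ (u ∘ Sum.inl) (u ∘ Sum.inr)

variable (𝕜 G n k) in
/-- The span of all the maps `Φ(P, g)`. -/
noncomputable def phiSpan : Submodule 𝕜
    (((Fin k → G × Fin n) →₀ 𝕜) →ₗ[𝕜] ((Fin k → G × Fin n) →₀ 𝕜)) :=
  Submodule.span 𝕜 {f | ∃ (P : Setoid (Fin k ⊕ Fin k)) (g : Fin k ⊕ Fin k → G),
    f = Phi G 𝕜 n P g}

lemma PhiU_mem_phiSpan (u : Fin k ⊕ Fin k → G × Fin n) :
    PhiU (𝕜 := 𝕜) u ∈ phiSpan 𝕜 G n k :=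
  Submodule.subset_span ⟨uSetoid u, fun a => (u a).1, rfl⟩

lemma phiSpan_comm (f : ((Fin k → G × Fin n) →₀ 𝕜) →ₗ[𝕜] ((Fin k → G × Fin n) →₀ 𝕜))
    (hf : f ∈ phiSpan 𝕜 G n k) (γ : Wr G n) :
    f ∘ₗ dActHom G 𝕜 n k γ = dActHom G 𝕜 n k γ ∘ₗ f := by
  induction hf using Submodule.span_induction with
  | mem x hx =>
    obtain ⟨P, g, rfl⟩ := hx
    exact phi_comm P g γ
  | zero => simp
  | add x y _ _ hx hy => rw [LinearMap.add_comp, LinearMap.comp_add, hx, hy]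
  | smul c x _ hx => rw [LinearMap.smul_comp, LinearMap.comp_smul, hx]

lemma span_step (t : ℕ) : ∀ j : ℕ,
    Fintype.card ((Fin k ⊕ Fin k) × (Fin k ⊕ Fin k)) + 1 ≤ j + t →
    ∀ φ : ((Fin k → G × Fin n) →₀ 𝕜) →ₗ[𝕜] ((Fin k → G × Fin n) →₀ 𝕜),
    (∀ γ : Wr G n, φ ∘ₗ dActHom G 𝕜 n k γ = dActHom G 𝕜 n k γ ∘ₗ φ) →
    (∀ m : Fin k ⊕ Fin k → G × Fin n, dcount m < j → Ent φ m = 0) →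
    φ ∈ phiSpan 𝕜 G n k := by
  classical
  induction t with
  | zero =>
    intro j hj φ _ hvan
    have hφ0 : φ = 0 := by
      apply ext_of_ent
      intro v w
      have hd : dcount (Sum.elim v w) < j := by
        have h1 : dcount (Sum.elim v w)
            ≤ Fintype.card ((Fin k ⊕ Fin k) × (Fin k ⊕ Fin k)) := by
          rw [← Finset.card_univ]
          exact Finset.card_filter_le _ _
        omega
      have := hvan (Sum.elim v w) hd
      rw [Ent_elim] at this
      rw [this]
      simp [ent]
    rw [hφ0]
    exact zero_mem _
  | succ t ih =>
    intro j hj φ hcomm hvan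
    set F : Finset (Fin k ⊕ Fin k → G × Fin n) :=
      Finset.univ.filter (fun u => rep G u = u ∧ dcount u = j) with hF
    set ψ : ((Fin k → G × Fin n) →₀ 𝕜) →ₗ[𝕜] ((Fin k → G × Fin n) →₀ 𝕜) :=
      ∑ u ∈ F, Ent φ u • PhiU (𝕜 := 𝕜) u with hψ
    have hψmem : ψ ∈ phiSpan 𝕜 G n k :=
      Submodule.sum_mem _ fun u _ => Submodule.smul_mem _ _ (PhiU_mem_phiSpan u)
    have hdiff_comm : ∀ γ : Wr G n,
        (φ - ψ) ∘ₗ dActHom G 𝕜 n k γ = dActHom G 𝕜 n k γ ∘ₗ (φ - ψ) := by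
      intro γ
      rw [LinearMap.sub_comp, LinearMap.comp_sub, hcomm γ, phiSpan_comm ψ hψmem γ]
    have hdiff_van : ∀ m : Fin k ⊕ Fin k → G × Fin n, dcount m < j + 1 →
        Ent (φ - ψ) m = 0 := by
      intro m hm
      rw [Ent_sub, hψ, Ent_sum]
      simp only [Ent_smul, Ent_PhiU]
      rcases Nat.lt_or_ge (dcount m) j with hlt | hge
      · rw [hvan m hlt]
        rw [Finset.sum_eq_zero, sub_zero]
        intro u hu
        rw [hF, Finset.mem_filter] at hu
        rw [if_neg, mul_zero]
        intro hC
        have := dcount_le_of_Cnd hC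
        omega
      · have hdm : dcount m = j := by omega
        obtain ⟨γ, hγ⟩ := rep_spec (G := G) m
        have hrepF : rep G m ∈ F := by
          rw [hF, Finset.mem_filter]
          refine ⟨Finset.mem_univ _, rep_idem m, ?_⟩
          rw [← hdm]
          conv_rhs => rw [hγ]
          rw [dcount_act]
        have hsum : ∑ u ∈ F, Ent φ u * (if Cnd u m then (1 : 𝕜) else 0)
            = Ent φ (rep G m) := by
          rw [Finset.sum_eq_single_of_mem (rep G m) hrepF]
          · rw [if_pos, mul_one]
            have := Cnd_act γ (rep G m)
            rwa [← hγ] at this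
          · intro u hu hne
            rw [hF, Finset.mem_filter] at hu
            rw [if_neg, mul_zero]
            intro hC
            have horb := exists_wr_of_Cnd_dcount hC (by omega)
            exact hne ((rep_eq_of_rel horb).symm.trans (hu.2.1)).symm
              |>.elim
        rw [hsum]
        have hE : Ent φ m = Ent φ (rep G m) := by
          conv_lhs => rw [hγ]
          rw [Ent_equivariant hcomm]
        rw [hE, sub_self]
    have hsub : φ - ψ ∈ phiSpan 𝕜 G n k := by
      refine ih (j + 1) (by omega) (φ - ψ) hdiff_comm hdiff_van
    have : φ = (φ - ψ) + ψ := by abel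
    rw [this]
    exact add_mem hsub hψmem

lemma mem_phiSpan_of_comm
    {φ : ((Fin k → G × Fin n) →₀ 𝕜) →ₗ[𝕜] ((Fin k → G × Fin n) →₀ 𝕜)}
    (hcomm : ∀ γ : Wr G n, φ ∘ₗ dActHom G 𝕜 n k γ = dActHom G 𝕜 n k γ ∘ₗ φ) :
    φ ∈ phiSpan 𝕜 G n k := by
  refine span_step (Fintype.card ((Fin k ⊕ Fin k) × (Fin k ⊕ Fin k)) + 1) 0
    (by omega) φ hcomm ?_
  intro m hm
  exact absurd hm (Nat.not_lt_zero _)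


-- ================== Maschke & density ==================

instance wrFintype {N H : Type*} [Group N] [Group H] {φ : H →* MulAut N}
    [Fintype N] [Fintype H] : Fintype (N ⋊[φ] H) :=
  Fintype.ofEquiv (N × H)
    ⟨fun p => ⟨p.1, p.2⟩, fun x => (x.left, x.right), fun _ => rfl, fun _ => rfl⟩

lemma wr_card {N H : Type*} [Group N] [Group H] {φ : H →* MulAut N}
    [Fintype N] [Fintype H] :
    Fintype.card (N ⋊[φ] H) = Fintype.card N * Fintype.card H := by
  rw [← Fintype.card_prod]
  exact Fintype.card_congr
    ⟨fun x => (x.left, x.right), fun p => ⟨p.1, p.2⟩, fun _ => rfl, fun _ => rfl⟩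

lemma card_wr_ne_zero (hchar : ¬ (ringChar 𝕜 ∣ Nat.factorial n * Fintype.card G ^ n)) :
    ((Fintype.card (Wr G n) : 𝕜)) ≠ 0 := by
  intro h0
  apply hchar
  have hcast := (CharP.cast_eq_zero_iff 𝕜 (ringChar 𝕜) (Fintype.card (Wr G n))).mp h0
  have hcard : Fintype.card (Wr G n) = Nat.factorial n * Fintype.card G ^ n := by
    rw [wr_card, Fintype.card_fun, Fintype.card_fin, Fintype.card_perm, Fintype.card_fin,
      mul_comm]
  rwa [hcard] at hcast

/-- The key step: an endomorphism commuting with everything in `phiSpan`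
lies in the image of the group algebra. -/
lemma mem_range_of_comm
    (hchar : ¬ (ringChar 𝕜 ∣ Nat.factorial n * Fintype.card G ^ n))
    {θ : ((Fin k → G × Fin n) →₀ 𝕜) →ₗ[𝕜] ((Fin k → G × Fin n) →₀ 𝕜)}
    (hθ : ∀ f ∈ phiSpan 𝕜 G n k, θ ∘ₗ f = f ∘ₗ θ) :
    θ ∈ (MonoidAlgebra.lift 𝕜
      (Module.End 𝕜 ((Fin k → G × Fin n) →₀ 𝕜)) (Wr G n) (dActHom G 𝕜 n k)).range := by
  classical
  have hcard := card_wr_ne_zero (G := G) (n := n) hchar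
  set Act : Wr G n →* Module.End 𝕜 ((Fin k → G × Fin n) → ((Fin k → G × Fin n) →₀ 𝕜)) :=
    { toFun := fun γ => LinearMap.compLeft (dActHom G 𝕜 n k γ) (Fin k → G × Fin n)
      map_one' := by
        apply LinearMap.ext; intro x; funext i
        show dActHom G 𝕜 n k 1 (x i) = x i
        rw [map_one]; rfl
      map_mul' := fun γ δ => by
        apply LinearMap.ext; intro x; funext i
        show dActHom G 𝕜 n k (γ * δ) (x i) = dActHom G 𝕜 n k γ (dActHom G 𝕜 n k δ (x i))
        rw [map_mul]; rfl } with hAct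
  have hAct_apply : ∀ (γ : Wr G n) (x : (Fin k → G × Fin n) → ((Fin k → G × Fin n) →₀ 𝕜)) (i : Fin k → G × Fin n),
      Act γ x i = dActHom G 𝕜 n k γ (x i) := fun γ x i => rfl
  set w₀ : (Fin k → G × Fin n) → ((Fin k → G × Fin n) →₀ 𝕜) := fun v => Finsupp.single v 1 with hw₀
  set N : Submodule 𝕜 ((Fin k → G × Fin n) → ((Fin k → G × Fin n) →₀ 𝕜)) := Submodule.span 𝕜 (Set.range fun γ : Wr G n => Act γ w₀)
    with hN
  have hNinv : ∀ (δ : Wr G n), ∀ x ∈ N, Act δ x ∈ N := by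
    intro δ x hx
    induction hx using Submodule.span_induction with
    | mem y hy =>
      obtain ⟨γ, rfl⟩ := hy
      have : Act δ (Act γ w₀) = Act (δ * γ) w₀ := by
        rw [map_mul]; rfl
      rw [this]
      exact Submodule.subset_span ⟨δ * γ, rfl⟩
    | zero => rw [map_zero]; exact zero_mem _
    | add y z _ _ hy hz => rw [map_add]; exact add_mem hy hz
    | smul c y _ hy => rw [map_smul]; exact Submodule.smul_mem _ _ hy
  obtain ⟨N', hcompl⟩ := Submodule.exists_isCompl N
  set p₀ : Module.End 𝕜 ((Fin k → G × Fin n) → ((Fin k → G × Fin n) →₀ 𝕜)) :=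
    N.subtype ∘ₗ (Submodule.projectionOnto N N' hcompl) with hp₀
  have hp₀mem : ∀ x, p₀ x ∈ N := fun x => (Submodule.projectionOnto N N' hcompl x).2
  have hp₀fix : ∀ x ∈ N, p₀ x = x := by
    intro x hx
    show (N.subtype) (Submodule.projectionOnto N N' hcompl x) = x
    conv_lhs => rw [show x = ((⟨x, hx⟩ : N) : (Fin k → G × Fin n) → ((Fin k → G × Fin n) →₀ 𝕜))
      from rfl, Submodule.projectionOnto_apply_left hcompl]
    rfl
  set q : Module.End 𝕜 ((Fin k → G × Fin n) → ((Fin k → G × Fin n) →₀ 𝕜)) :=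
    (Fintype.card (Wr G n) : 𝕜)⁻¹ • ∑ γ : Wr G n, Act γ * p₀ * Act γ⁻¹ with hq
  have hq_apply : ∀ x, q x = (Fintype.card (Wr G n) : 𝕜)⁻¹ •
      ∑ γ : Wr G n, Act γ (p₀ (Act γ⁻¹ x)) := by
    intro x
    rw [hq]
    simp [LinearMap.sum_apply, Module.End.mul_apply]
  have hqmem : ∀ x, q x ∈ N := by
    intro x
    rw [hq_apply]
    refine Submodule.smul_mem _ _ (Submodule.sum_mem _ fun γ _ => ?_)
    exact hNinv γ _ (hp₀mem _)
  have hqfix : ∀ x ∈ N, q x = x := by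
    intro x hx
    rw [hq_apply]
    have : ∀ γ : Wr G n, Act γ (p₀ (Act γ⁻¹ x)) = x := by
      intro γ
      rw [hp₀fix _ (hNinv γ⁻¹ x hx)]
      have : Act γ (Act γ⁻¹ x) = Act (γ * γ⁻¹) x := by rw [map_mul]; rfl
      rw [this, mul_inv_cancel, map_one]
      rfl
    simp only [this, Finset.sum_const, Finset.card_univ]
    rw [← Nat.cast_smul_eq_nsmul 𝕜, smul_smul, inv_mul_cancel₀ hcard, one_smul]
  have hqcomm : ∀ δ : Wr G n, Act δ * q = q * Act δ := by
    intro δ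
    rw [hq, mul_smul_comm, smul_mul_assoc, Finset.mul_sum, Finset.sum_mul]
    congr 1
    refine Fintype.sum_equiv (Equiv.mulLeft δ) _ _ fun γ => ?_
    show Act δ * (Act γ * p₀ * Act γ⁻¹) = Act (δ * γ) * p₀ * Act (δ * γ)⁻¹ * Act δ
    have hinv : Act (δ * γ)⁻¹ * Act δ = Act γ⁻¹ := by
      rw [← map_mul, mul_inv_rev, mul_assoc, inv_mul_cancel, mul_one]
    calc Act δ * (Act γ * p₀ * Act γ⁻¹)
        = Act (δ * γ) * p₀ * Act γ⁻¹ := by rw [map_mul]; noncomm_ring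
      _ = Act (δ * γ) * p₀ * (Act (δ * γ)⁻¹ * Act δ) := by rw [hinv]
      _ = Act (δ * γ) * p₀ * Act (δ * γ)⁻¹ * Act δ := by
          rw [← mul_assoc]
  -- components of q commute with the action, hence lie in phiSpan
  set E : (Fin k → G × Fin n) → (Fin k → G × Fin n) → Module.End 𝕜 ((Fin k → G × Fin n) →₀ 𝕜) := fun i j =>
    (LinearMap.proj i) ∘ₗ q ∘ₗ (LinearMap.single 𝕜 (fun _ : Fin k → G × Fin n => ((Fin k → G × Fin n) →₀ 𝕜)) j) with hE
  have hE_apply : ∀ i j (z : (Fin k → G × Fin n) →₀ 𝕜), E i j z = q (Pi.single j z) i := fun i j z => rfl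
  have hsingle_act : ∀ (γ : Wr G n) (j : Fin k → G × Fin n) (z : (Fin k → G × Fin n) →₀ 𝕜),
      Pi.single (M := fun _ : Fin k → G × Fin n => ((Fin k → G × Fin n) →₀ 𝕜)) j
        (dActHom G 𝕜 n k γ z) = Act γ (Pi.single j z) := by
    intro γ j z
    funext i
    rw [hAct_apply]
    by_cases hij : i = j
    · subst hij; rw [Pi.single_eq_same, Pi.single_eq_same]
    · rw [Pi.single_eq_of_ne hij, Pi.single_eq_of_ne hij, map_zero]
  have hEcomm : ∀ i j (γ : Wr G n),
      E i j ∘ₗ dActHom G 𝕜 n k γ = dActHom G 𝕜 n k γ ∘ₗ E i j := by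
    intro i j γ
    apply LinearMap.ext; intro z
    show E i j (dActHom G 𝕜 n k γ z) = dActHom G 𝕜 n k γ (E i j z)
    rw [hE_apply, hE_apply, hsingle_act]
    have h1 : q (Act γ (Pi.single j z)) = Act γ (q (Pi.single j z)) := by
      have := hqcomm γ
      calc q (Act γ (Pi.single j z)) = (q * Act γ) (Pi.single j z) := rfl
        _ = (Act γ * q) (Pi.single j z) := by rw [this]
        _ = Act γ (q (Pi.single j z)) := rfl
    rw [h1, hAct_apply]
  have hEθ : ∀ i j, θ ∘ₗ E i j = E i j ∘ₗ θ := by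
    intro i j
    exact hθ _ (mem_phiSpan_of_comm (hEcomm i j))
  -- q commutes with the diagonal θ
  have hqθ : ∀ x : (Fin k → G × Fin n) → ((Fin k → G × Fin n) →₀ 𝕜),
      (fun i => θ (q x i)) = (fun i => q (fun j' => θ (x j')) i) := by
    intro x
    funext i
    have hdec : ∀ y : (Fin k → G × Fin n) → ((Fin k → G × Fin n) →₀ 𝕜),
        q y i = ∑ j, E i j (y j) := by
      intro y
      conv_lhs => rw [show y = ∑ j, Pi.single j (y j) from (Finset.univ_sum_single y).symm]
      rw [map_sum]
      simp only [Finset.sum_apply]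
      rfl
    rw [hdec, map_sum, hdec]
    refine Finset.sum_congr rfl fun j _ => ?_
    exact LinearMap.congr_fun (hEθ i j) (x j)
  -- conclude
  have hw₀N : w₀ ∈ N := by
    refine Submodule.subset_span ⟨1, ?_⟩
    show Act 1 w₀ = w₀
    rw [map_one]
    rfl
  have hΘw₀ : (fun i => θ (w₀ i)) ∈ N := by
    have h1 : q (fun i => θ (w₀ i)) = (fun i => θ (w₀ i)) := by
      have h2 := hqθ w₀
      rw [hqfix w₀ hw₀N] at h2
      exact h2.symm
    rw [← h1]
    exact hqmem _
  rw [hN, Submodule.mem_span_range_iff_exists_fun] at hΘw₀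
  obtain ⟨c, hc⟩ := hΘw₀
  have hlift : (MonoidAlgebra.lift 𝕜
        (Module.End 𝕜 ((Fin k → G × Fin n) →₀ 𝕜)) (Wr G n) (dActHom G 𝕜 n k))
        (∑ γ : Wr G n, MonoidAlgebra.single γ (c γ))
      = ∑ γ : Wr G n, c γ • dActHom G 𝕜 n k γ := by
    rw [map_sum]
    refine Finset.sum_congr rfl fun γ _ => ?_
    rw [MonoidAlgebra.lift_single]
  have hfin : (MonoidAlgebra.lift 𝕜
      (Module.End 𝕜 ((Fin k → G × Fin n) →₀ 𝕜)) (Wr G n) (dActHom G 𝕜 n k))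
      (∑ γ : Wr G n, MonoidAlgebra.single γ (c γ)) = θ := ?_
  · exact ⟨∑ γ : Wr G n, MonoidAlgebra.single γ (c γ), hfin⟩
  rw [hlift]
  apply ext_of_ent
  intro v w
  have hv : ∑ γ : Wr G n, c γ • (dActHom G 𝕜 n k γ (Finsupp.single v 1))
      = θ (Finsupp.single v 1) := by
    have h2 := congrFun hc v
    simp only [Finset.sum_apply, Pi.smul_apply] at h2
    exact h2
  show (∑ γ : Wr G n, c γ • dActHom G 𝕜 n k γ) (Finsupp.single v 1) w
      = θ (Finsupp.single v 1) w
  rw [LinearMap.sum_apply]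
  simp only [LinearMap.smul_apply]
  rw [hv]


/-- Elements in the image of the group algebra commute with every `Φ(P, g)`. -/
lemma lift_comm_phi (x : MonoidAlgebra 𝕜 (Wr G n)) (P : Setoid (Fin k ⊕ Fin k))
    (g : Fin k ⊕ Fin k → G) :
    ((MonoidAlgebra.lift 𝕜 (Module.End 𝕜 ((Fin k → G × Fin n) →₀ 𝕜)) (Wr G n)
        (dActHom G 𝕜 n k)) x) ∘ₗ Phi G 𝕜 n P g
      = Phi G 𝕜 n P g ∘ₗ ((MonoidAlgebra.lift 𝕜
        (Module.End 𝕜 ((Fin k → G × Fin n) →₀ 𝕜)) (Wr G n) (dActHom G 𝕜 n k)) x) := by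
  induction x using MonoidAlgebra.induction_linear with
  | zero => rw [map_zero]; rw [LinearMap.zero_comp, LinearMap.comp_zero]
  | add f h hf hh => rw [map_add, LinearMap.add_comp, LinearMap.comp_add, hf, hh]
  | single γ b =>
    rw [MonoidAlgebra.lift_single, LinearMap.smul_comp, LinearMap.comp_smul,
      (phi_comm P g γ).symm]

end DC

theorem double_centralizer (𝕜 : Type*) [Field 𝕜]
    (G : Type*) [Group G] [Fintype G] (n : ℕ) (hn : 1 ≤ n)
    (hchar : ¬ (ringChar 𝕜 ∣ Nat.factorial n * Fintype.card G ^ n)) (k : ℕ)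
    (θ : ((Fin k → G × Fin n) →₀ 𝕜) →ₗ[𝕜] ((Fin k → G × Fin n) →₀ 𝕜)) :
    (∀ (P : Setoid (Fin k ⊕ Fin k)) (g : Fin k ⊕ Fin k → G),
      θ ∘ₗ Phi G 𝕜 n P g = Phi G 𝕜 n P g ∘ₗ θ)
    ↔ θ ∈ (MonoidAlgebra.lift 𝕜 (Module.End 𝕜 ((Fin k → G × Fin n) →₀ 𝕜)) (Wr G n)
            (dActHom G 𝕜 n k)).range := by
  constructor
  · intro hθ
    apply DC.mem_range_of_comm hchar
    intro f hf
    induction hf using Submodule.span_induction with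
    | mem x hx =>
      obtain ⟨P, g, rfl⟩ := hx
      exact hθ P g
    | zero => rw [LinearMap.comp_zero, LinearMap.zero_comp]
    | add x y _ _ hx hy => rw [LinearMap.comp_add, LinearMap.add_comp, hx, hy]
    | smul c x _ hx => rw [LinearMap.comp_smul, LinearMap.smul_comp, hx]
  · intro hθ P g
    obtain ⟨x, hx⟩ := hθ
    have hx' : (MonoidAlgebra.lift 𝕜 (Module.End 𝕜 ((Fin k → G × Fin n) →₀ 𝕜)) (Wr G n)
        (dActHom G 𝕜 n k)) x = θ := hx
    have h := DC.lift_comm_phi (𝕜 := 𝕜) x P g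
    rw [hx'] at h
    exact h

end GPC
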